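/- If a set X of density matrices on n qudits corrects t deletion errors (i.e., for distinct ρ₁, ρ₂ ∈ X, D^t(ρ₁) ∩ D^t(ρ₂) = ∅), then for every s, u ∈ ℕ with s + u = t, the error spheres (I^u∘D^s)(ρ₁) and (I^u∘D^s)(ρ₂) are disjoint for all distinct ρ₁, ρ₂ ∈ X; hence X corrects any total of t insertion and deletion errors. -/
import Mathlib


open Matrix
open scoped ComplexOrder

/-- Matrices on `n` qudits of level `l`. -/
abbrev QMat (l n : ℕ) := Matrix (Fin n → Fin l) (Fin n → Fin l) ℂ

/-- A quantum state on some finite number of qudits. -/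
def QState (l : ℕ) := Σ n : ℕ, QMat l n

/-- Density matrix: positive semidefinite with trace 1. -/
def IsDensity {l n : ℕ} (ρ : QMat l n) : Prop := ρ.PosSemidef ∧ ρ.trace = 1

def IsDensityS {l : ℕ} (ρ : QState l) : Prop := ρ.2.PosSemidef ∧ ρ.2.trace = 1

/-- Partial trace over the qudit at position `p`. -/
noncomputable def traceOut {l n : ℕ} (p : Fin (n + 1)) (ρ : QMat l (n + 1)) : QMat l n :=
  fun x y => ∑ z : Fin l, ρ (p.insertNth z x) (p.insertNth z y)

/-- Single deletion: all states obtained by tracing out one qudit. -/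
def del1 {l : ℕ} : QState l → Set (QState l)
  | ⟨0, _⟩ => ∅
  | ⟨n + 1, ρ⟩ => { σ | ∃ p : Fin (n + 1), σ = ⟨n, traceOut p ρ⟩ }

/-- Single insertion sphere: density matrices having `ρ` among their single deletions. -/
def ins1 {l : ℕ} (ρ : QState l) : Set (QState l) :=
  { σ | IsDensityS σ ∧ ρ ∈ del1 σ }

def delSet {l : ℕ} (X : Set (QState l)) : Set (QState l) := ⋃ ρ ∈ X, del1 ρ
def insSet {l : ℕ} (X : Set (QState l)) : Set (QState l) := ⋃ ρ ∈ X, ins1 ρ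

/-- `s`-deletion errors. -/
def Dq {l : ℕ} : ℕ → Set (QState l) → Set (QState l)
  | 0, X => X
  | s + 1, X => delSet (Dq s X)

/-- `t`-insertion errors. -/
def Iq {l : ℕ} : ℕ → Set (QState l) → Set (QState l)
  | 0, X => X
  | t + 1, X => insSet (Iq t X)

/-- Quantum indel distance. -/
noncomputable def qdist {l : ℕ} (ρ₁ ρ₂ : QState l) : ℕ :=
  sInf { k | ∃ s t : ℕ, s + t = k ∧ (Dq s {ρ₁} ∩ Dq t {ρ₂}).Nonempty }

lemma succAbove_val {n : ℕ} (a : Fin (n+1)) (b : Fin n) :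
    (a.succAbove b).val = if b.val < a.val then b.val else b.val + 1 := by
  rcases lt_or_ge (b.castSucc) a with h | h
  · rw [Fin.succAbove_of_castSucc_lt _ _ h, Fin.coe_castSucc,
      if_pos (by simpa [Fin.lt_iff_val_lt_val] using h)]
  · rw [Fin.succAbove_of_le_castSucc _ _ h, Fin.val_succ,
      if_neg (by simp [Fin.le_iff_val_le_val] at h; omega)]

lemma succAbove_pair_lt {n : ℕ} (p q : Fin (n+2)) (h : p.val < q.val) :
    ∃ p' q' : Fin (n+1), p.succAbove q' = q ∧ q.succAbove p' = p ∧
      ∀ j : Fin n, p.succAbove (q'.succAbove j) = q.succAbove (p'.succAbove j) := by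
  have hq2 : q.val < n + 2 := q.isLt
  have hp2 : p.val < n + 2 := p.isLt
  have hq : q.val - 1 < n + 1 := by omega
  have hp : p.val < n + 1 := by omega
  refine ⟨⟨p.val, hp⟩, ⟨q.val - 1, hq⟩, ?_, ?_, ?_⟩
  · apply Fin.ext; rw [succAbove_val]; simp only; split_ifs <;> omega
  · apply Fin.ext; rw [succAbove_val]; simp only; split_ifs <;> omega
  · intro j
    have hj : j.val < n := j.isLt
    apply Fin.ext
    rw [succAbove_val, succAbove_val, succAbove_val, succAbove_val]
    simp only
    split_ifs <;> omega

lemma succAbove_pair {n : ℕ} (p q : Fin (n+2)) (h : p ≠ q) :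
    ∃ p' q' : Fin (n+1), p.succAbove q' = q ∧ q.succAbove p' = p ∧
      ∀ j : Fin n, p.succAbove (q'.succAbove j) = q.succAbove (p'.succAbove j) := by
  rcases lt_or_gt_of_ne (Fin.val_ne_of_ne h) with hlt | hgt
  · exact succAbove_pair_lt p q hlt
  · obtain ⟨p', q', h1, h2, h3⟩ := succAbove_pair_lt q p hgt
    exact ⟨q', p', h2, h1, fun j => (h3 j).symm⟩

lemma insertNth_comm' {l n : ℕ} (p q : Fin (n+2)) (p' q' : Fin (n+1))
    (h1 : p.succAbove q' = q) (h2 : q.succAbove p' = p)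
    (h3 : ∀ j : Fin n, p.succAbove (q'.succAbove j) = q.succAbove (p'.succAbove j))
    (z w : Fin l) (x : Fin n → Fin l) :
    p.insertNth z (q'.insertNth w x) = q.insertNth (α := fun _ => Fin l) w (p'.insertNth z x) := by
  funext k
  rcases eq_or_ne k p with rfl | hkp
  · conv_rhs => rw [← h2]
    simp only [Fin.insertNth_apply_same, Fin.insertNth_apply_succAbove]
  · obtain ⟨m, rfl⟩ := Fin.exists_succAbove_eq hkp
    rcases eq_or_ne m q' with rfl | hmq
    · rw [h1]
      simp only [Fin.insertNth_apply_same, Fin.insertNth_apply_succAbove]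
      rw [← h1]
      simp only [Fin.insertNth_apply_succAbove, Fin.insertNth_apply_same]
    · obtain ⟨j, rfl⟩ := Fin.exists_succAbove_eq hmq
      rw [h3 j]
      simp only [Fin.insertNth_apply_succAbove]
      rw [← h3 j]
      simp only [Fin.insertNth_apply_succAbove]

lemma traceOut_comm {l n : ℕ} (p q : Fin (n+2)) (h : p ≠ q) (σ : QMat l (n+2)) :
    ∃ p' q' : Fin (n+1), traceOut q' (traceOut p σ) = traceOut p' (traceOut q σ) := by
  obtain ⟨p', q', h1, h2, h3⟩ := succAbove_pair p q h
  refine ⟨p', q', ?_⟩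
  funext x y
  simp only [traceOut]
  rw [Finset.sum_comm]
  congr 1; funext z; congr 1; funext w
  rw [insertNth_comm' p q p' q' h1 h2 h3 z w x, insertNth_comm' p q p' q' h1 h2 h3 z w y]

lemma mem_delSet {l : ℕ} {X : Set (QState l)} {τ : QState l} :
    τ ∈ delSet X ↔ ∃ σ ∈ X, τ ∈ del1 σ := by
  simp [delSet]

/-- Diamond property for single deletions. -/
lemma del1_diamond {l : ℕ} {σ τ₁ τ₂ : QState l}
    (h1 : τ₁ ∈ del1 σ) (h2 : τ₂ ∈ del1 σ) :
    τ₁ = τ₂ ∨ ∃ ω, ω ∈ del1 τ₁ ∧ ω ∈ del1 τ₂ := by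
  obtain ⟨m, A⟩ := σ
  match m with
  | 0 => exact absurd h1 (by simp [del1])
  | 1 =>
    obtain ⟨p₁, rfl⟩ := h1
    obtain ⟨p₂, rfl⟩ := h2
    left; rw [Fin.fin_one_eq_zero p₁, Fin.fin_one_eq_zero p₂]
  | (n + 2) =>
    obtain ⟨p₁, rfl⟩ := h1
    obtain ⟨p₂, rfl⟩ := h2
    rcases eq_or_ne p₁ p₂ with rfl | hne
    · left; rfl
    · obtain ⟨p', q', hcomm⟩ := traceOut_comm p₁ p₂ hne A
      right
      exact ⟨⟨n, traceOut q' (traceOut p₁ A)⟩, ⟨q', rfl⟩, ⟨p', by rw [hcomm]⟩⟩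

lemma del1_size {l : ℕ} {σ τ : QState l} (h : τ ∈ del1 σ) : τ.1 + 1 = σ.1 := by
  obtain ⟨m, A⟩ := σ
  match m with
  | 0 => exact absurd h (by simp [del1])
  | n + 1 => obtain ⟨p, rfl⟩ := h; rfl

lemma Dq_mono {l : ℕ} {X Y : Set (QState l)} (h : X ⊆ Y) (s : ℕ) : Dq s X ⊆ Dq s Y := by
  induction s with
  | zero => exact h
  | succ s ih =>
    intro τ hτ
    rw [show Dq (s+1) X = delSet (Dq s X) from rfl, mem_delSet] at hτ
    obtain ⟨σ, hσ, hτσ⟩ := hτ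
    exact mem_delSet.mpr ⟨σ, ih hσ, hτσ⟩

lemma Dq_add {l : ℕ} (a b : ℕ) (X : Set (QState l)) : Dq a (Dq b X) = Dq (a + b) X := by
  induction a with
  | zero => simp [Dq, Nat.zero_add]
  | succ a ih =>
    show delSet (Dq a (Dq b X)) = Dq (a + 1 + b) X
    rw [ih, Nat.add_right_comm a 1 b]
    rfl

lemma Dq_size {l : ℕ} {ρ τ : QState l} {s : ℕ} (h : τ ∈ Dq s {ρ}) : τ.1 + s = ρ.1 := by
  induction s generalizing τ with
  | zero => rw [show τ = ρ from h]; omega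
  | succ s ih =>
    obtain ⟨σ, hσ, hτσ⟩ := mem_delSet.mp h
    have := del1_size hτσ
    have := ih hσ
    omega

lemma del1_subset_Dq {l : ℕ} {ρ σ : QState l} {s : ℕ} (h : σ ∈ Dq s {ρ}) :
    del1 σ ⊆ Dq (s + 1) {ρ} :=
  fun τ hτ => mem_delSet.mpr ⟨σ, h, hτ⟩

lemma Dq_singleton_nonempty {l : ℕ} {σ : QState l} {s : ℕ} (h : s ≤ σ.1) :
    (Dq s {σ} : Set (QState l)).Nonempty := by
  induction s with
  | zero => exact ⟨σ, rfl⟩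
  | succ s ih =>
    obtain ⟨τ, hτ⟩ := ih (by omega)
    have hsz := Dq_size hτ
    obtain ⟨k, B⟩ := τ
    simp only at hsz
    match k, B with
    | 0, B => omega
    | k + 1, B =>
      exact ⟨⟨k, traceOut 0 B⟩, del1_subset_Dq hτ ⟨0, rfl⟩⟩

lemma Dq_trans {l : ℕ} {ρ τ : QState l} {a : ℕ} (h : τ ∈ Dq a {ρ}) (b : ℕ) :
    Dq b {τ} ⊆ Dq (a + b) {ρ} := by
  have h1 : ({τ} : Set (QState l)) ⊆ Dq a {ρ} := by simpa using h
  have := Dq_mono h1 b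
  rwa [Dq_add, Nat.add_comm b a] at this

/-- Strip lemma for confluence. -/
lemma Dq_strip {l : ℕ} : ∀ (d : ℕ) (σ τ ω : QState l), τ ∈ del1 σ → ω ∈ Dq d {σ} →
    (∃ e, e + 1 = d ∧ ω ∈ Dq e {τ}) ∨ (∃ χ, χ ∈ Dq d {τ} ∧ χ ∈ del1 ω) := by
  intro d
  induction d with
  | zero =>
    intro σ τ ω hτ hω
    right
    exact ⟨τ, rfl, (show ω = σ from hω) ▸ hτ⟩
  | succ d ih =>
    intro σ τ ω hτ hω
    obtain ⟨ω', hω', hωω'⟩ := mem_delSet.mp hω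
    rcases ih σ τ ω' hτ hω' with ⟨e, he, hω'τ⟩ | ⟨χ, hχτ, hχω'⟩
    · left
      exact ⟨d, rfl, he ▸ del1_subset_Dq hω'τ hωω'⟩
    · rcases del1_diamond hωω' hχω' with rfl | ⟨ψ, hψω, hψχ⟩
      · left; exact ⟨d, rfl, hχτ⟩
      · right; exact ⟨ψ, del1_subset_Dq hχτ hψχ, hψω⟩

/-- Confluence with degree tracking. -/
lemma Dq_confluence {l : ℕ} : ∀ (u : ℕ) (σ τ₁ τ₂ : QState l),
    τ₁ ∈ Dq u {σ} → τ₂ ∈ Dq u {σ} →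
    ∃ d, d ≤ u ∧ (Dq d {τ₁} ∩ Dq d {τ₂}).Nonempty := by
  intro u
  induction u with
  | zero =>
    intro σ τ₁ τ₂ h1 h2
    cases (show τ₁ = σ from h1); cases (show τ₂ = σ from h2)
    exact ⟨0, le_rfl, σ, rfl, rfl⟩
  | succ u ih =>
    intro σ τ₁ τ₂ h1 h2
    obtain ⟨τ₁', hτ₁', hd1⟩ := mem_delSet.mp h1
    obtain ⟨τ₂', hτ₂', hd2⟩ := mem_delSet.mp h2
    obtain ⟨d, hdu, ω, hω₁, hω₂⟩ := ih σ τ₁' τ₂' hτ₁' hτ₂'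
    rcases Dq_strip d τ₁' τ₁ ω hd1 hω₁ with ⟨e₁, he₁, hL1⟩ | ⟨χ₁, hχ₁, hχ₁ω⟩ <;>
      rcases Dq_strip d τ₂' τ₂ ω hd2 hω₂ with ⟨e₂, he₂, hL2⟩ | ⟨χ₂, hχ₂, hχ₂ω⟩
    · have : e₁ = e₂ := by omega
      exact ⟨e₁, by omega, ω, hL1, this ▸ hL2⟩
    · refine ⟨d, by omega, χ₂, ?_, hχ₂⟩
      have := del1_subset_Dq hL1 hχ₂ω
      rwa [he₁] at this
    · refine ⟨d, by omega, χ₁, hχ₁, ?_⟩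
      have := del1_subset_Dq hL2 hχ₁ω
      rwa [he₂] at this
    · rcases del1_diamond hχ₁ω hχ₂ω with rfl | ⟨ψ, hψ₁, hψ₂⟩
      · exact ⟨d, by omega, χ₁, hχ₁, hχ₂⟩
      · exact ⟨d + 1, by omega, ψ, del1_subset_Dq hχ₁ hψ₁, del1_subset_Dq hχ₂ hψ₂⟩

/-- Membership in an insertion sphere gives a deletion witness. -/
lemma Iq_mem {l : ℕ} : ∀ (u : ℕ) (X : Set (QState l)) (σ : QState l),
    σ ∈ Iq u X → ∃ τ ∈ X, τ ∈ Dq u {σ} := by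
  intro u
  induction u with
  | zero => intro X σ hσ; exact ⟨σ, hσ, rfl⟩
  | succ u ih =>
    intro X σ hσ
    obtain ⟨σ', hσ', hins⟩ : ∃ σ' ∈ Iq u X, σ ∈ ins1 σ' := by
      simpa [Iq, insSet] using hσ
    obtain ⟨τ, hτX, hτ⟩ := ih X σ' hσ'
    refine ⟨τ, hτX, ?_⟩
    have h1 : σ' ∈ Dq 1 {σ} := mem_delSet.mpr ⟨σ, rfl, hins.2⟩
    have := Dq_trans h1 u hτ
    rwa [Nat.add_comm] at this

/-- If `X` corrects `t` deletion errors, then for every `s + u = t` the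
`(I^u ∘ D^s)`-error spheres of distinct elements of `X` are disjoint:
`X` corrects any total of `t` insertion and deletion errors. -/
theorem del_correcting_corrects_insdel {l n t : ℕ} (htn : t ≤ n)
    (X : Set (QState l)) (hX : ∀ ρ ∈ X, ρ.1 = n ∧ IsDensityS ρ)
    (hcorr : ∀ ρ₁ ∈ X, ∀ ρ₂ ∈ X, ρ₁ ≠ ρ₂ → Dq t {ρ₁} ∩ Dq t {ρ₂} = ∅) :
    ∀ s u : ℕ, s + u = t → ∀ ρ₁ ∈ X, ∀ ρ₂ ∈ X, ρ₁ ≠ ρ₂ →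
      Iq u (Dq s {ρ₁}) ∩ Iq u (Dq s {ρ₂}) = ∅ := by
  intro s u hsu ρ₁ h₁ ρ₂ h₂ hne
  rw [Set.eq_empty_iff_forall_notMem]
  rintro σ ⟨hσ₁, hσ₂⟩
  obtain ⟨τ₁, hτ₁s, hτ₁⟩ := Iq_mem u (Dq s {ρ₁}) σ hσ₁
  obtain ⟨τ₂, hτ₂s, hτ₂⟩ := Iq_mem u (Dq s {ρ₂}) σ hσ₂
  obtain ⟨d, hdu, ω, hω₁, hω₂⟩ := Dq_confluence u σ τ₁ τ₂ hτ₁ hτ₂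
  have hωρ₁ : ω ∈ Dq (s + d) {ρ₁} := Dq_trans hτ₁s d hω₁
  have hωρ₂ : ω ∈ Dq (s + d) {ρ₂} := Dq_trans hτ₂s d hω₂
  have hn₁ : ρ₁.1 = n := (hX ρ₁ h₁).1
  have hsz : ω.1 + (s + d) = ρ₁.1 := Dq_size hωρ₁
  obtain ⟨ψ, hψ⟩ := Dq_singleton_nonempty (σ := ω) (s := u - d) (by omega)
  have hψ₁ : ψ ∈ Dq (s + d + (u - d)) {ρ₁} := Dq_trans hωρ₁ _ hψ
  have hψ₂ : ψ ∈ Dq (s + d + (u - d)) {ρ₂} := Dq_trans hωρ₂ _ hψ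
  have ht : s + d + (u - d) = t := by omega
  rw [ht] at hψ₁ hψ₂
  have := hcorr ρ₁ h₁ ρ₂ h₂ hne
  rw [Set.eq_empty_iff_forall_notMem] at this
  exact this ψ ⟨hψ₁, hψ₂⟩
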